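/- Let k be an integer with k ≥ 2 and ΛQ(y) = 2k·y^k/(1 + y^{2k}). There exists a constant C > 0, depending only on k, such that for all scales 0 < λ_in ≤ λ_out: (1/(λ_in·λ_out))·∫_0^∞ ΛQ(r/λ_in)·ΛQ(r/λ_out)·r dr ≤ C·(λ_in/λ_out)^{k−1}. -/

import Mathlib

open MeasureTheory Set

noncomputable def LamQ (k : ℕ) (y : ℝ) : ℝ := 2 * k * y ^ k / (1 + y ^ (2 * k))

lemma LamQ_nonneg (k : ℕ) {y : ℝ} (hy : 0 ≤ y) : 0 ≤ LamQ k y := by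
  unfold LamQ; positivity

lemma LamQ_le_pow (k : ℕ) {y : ℝ} (hy : 0 ≤ y) : LamQ k y ≤ 2 * k * y ^ k := by
  unfold LamQ
  apply div_le_self (by positivity)
  nlinarith [pow_nonneg hy (2*k)]

lemma LamQ_le_inv_pow (k : ℕ) {y : ℝ} (hy : 0 < y) : LamQ k y ≤ 2 * k / y ^ k := by
  unfold LamQ
  have h1 : (0:ℝ) < y ^ (2*k) := by positivity
  have h2 : y ^ (2*k) = y ^ k * y ^ k := by rw [two_mul, pow_add]
  rw [div_le_div_iff₀ (by positivity) (by positivity)]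
  nlinarith [h2, (Nat.cast_nonneg k : (0:ℝ) ≤ k), pow_nonneg hy.le k]

/-- Inter-bubble interaction estimate: for `k ≥ 2` there exists `C = C(k) > 0` such that
for all scales `0 < λ_in ≤ λ_out`,
`(λ_in λ_out)⁻¹ ∫₀^∞ ΛQ(r/λ_in) ΛQ(r/λ_out) r dr ≤ C (λ_in/λ_out)^{k-1}`. -/
theorem stmt_8 (k : ℕ) (hk : 2 ≤ k) :
    ∃ C > (0 : ℝ), ∀ lin lout : ℝ, 0 < lin → lin ≤ lout →
      (1 / (lin * lout)) *
          ∫ r in Set.Ioi (0 : ℝ), LamQ k (r / lin) * LamQ k (r / lout) * r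
        ≤ C * (lin / lout) ^ (k - 1) := by
  have hk0 : (0:ℝ) < k := by positivity
  refine ⟨4 * k ^ 2, by positivity, ?_⟩
  intro lin lout hl hle
  have hL : (0:ℝ) < lout := hl.trans_le hle
  set a : ℝ := 4 * k ^ 2 * (lin / lout) ^ k with ha
  set b : ℝ := 4 * k ^ 2 * (lin * lout) ^ k with hb
  have ha0 : 0 ≤ a := by positivity
  have hb0 : 0 ≤ b := by positivity
  set h : ℝ → ℝ := fun r => if r ≤ lout then a * r else b * r ^ ((1:ℝ) - 2 * k) with hh
  -- pointwise bound
  have hFh : ∀ r ∈ Ioi (0:ℝ), LamQ k (r / lin) * LamQ k (r / lout) * r ≤ h r := by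
    intro r hr
    simp only [mem_Ioi] at hr
    by_cases hcase : r ≤ lout
    · simp only [hh, hcase, if_true]
      have h1 : LamQ k (r / lin) ≤ 2 * k / (r / lin) ^ k :=
        LamQ_le_inv_pow k (by positivity)
      have h2 : LamQ k (r / lout) ≤ 2 * k * (r / lout) ^ k :=
        LamQ_le_pow k (by positivity)
      calc LamQ k (r / lin) * LamQ k (r / lout) * r
          ≤ (2 * k / (r / lin) ^ k) * (2 * k * (r / lout) ^ k) * r := by
            apply mul_le_mul_of_nonneg_right _ hr.le
            exact mul_le_mul h1 h2 (LamQ_nonneg k (by positivity)) (by positivity)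
        _ = a * r := by
            rw [ha, div_pow, div_pow]
            field_simp
            ring_nf
            have hLk : lout ^ k * lout⁻¹ ^ k = 1 := by
              rw [← mul_pow, mul_inv_cancel₀ hL.ne', one_pow]
            linear_combination (-(lin ^ k * 4)) * hLk
    · push_neg at hcase
      simp only [hh, not_le.mpr hcase, if_false]
      have hr' : (0:ℝ) < r := hr
      have h1 : LamQ k (r / lin) ≤ 2 * k / (r / lin) ^ k :=
        LamQ_le_inv_pow k (by positivity)
      have h2 : LamQ k (r / lout) ≤ 2 * k / (r / lout) ^ k :=
        LamQ_le_inv_pow k (by positivity)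
      have hrpow : r ^ ((1:ℝ) - 2 * k) = r / r ^ (2 * k) := by
        rw [Real.rpow_sub hr', Real.rpow_one]
        rw [show ((2:ℝ) * k) = ((2 * k : ℕ) : ℝ) by push_cast; ring,
          Real.rpow_natCast]
      calc LamQ k (r / lin) * LamQ k (r / lout) * r
          ≤ (2 * k / (r / lin) ^ k) * (2 * k / (r / lout) ^ k) * r := by
            apply mul_le_mul_of_nonneg_right _ hr.le
            exact mul_le_mul h1 h2 (LamQ_nonneg k (by positivity)) (by positivity)
        _ = b * r ^ ((1:ℝ) - 2 * k) := by
            rw [hrpow, hb, div_pow, div_pow]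
            have : r ^ (2 * k) = r ^ k * r ^ k := by rw [two_mul, pow_add]
            field_simp
            ring
  have hF0 : ∀ r ∈ Ioi (0:ℝ), 0 ≤ LamQ k (r / lin) * LamQ k (r / lout) * r := by
    intro r hr; simp only [mem_Ioi] at hr
    have h1 := LamQ_nonneg k (show (0:ℝ) ≤ r/lin by positivity)
    have h2 := LamQ_nonneg k (show (0:ℝ) ≤ r/lout by positivity)
    positivity
  have hexp : (1:ℝ) - 2 * k < -1 := by
    have : (2:ℝ) ≤ k := by exact_mod_cast hk
    linarith
  have hInt2 : IntegrableOn h (Ioi lout) := by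
    have hb' : IntegrableOn (fun r : ℝ => b * r ^ ((1:ℝ) - 2*k)) (Ioi lout) :=
      (integrableOn_Ioi_rpow_of_lt hexp hL).const_mul b
    exact hb'.congr_fun
      (fun r hr => by simp only [mem_Ioi] at hr; simp [hh, not_le.mpr hr]) measurableSet_Ioi
  have hInt1 : IntegrableOn h (Ioc 0 lout) := by
    have ha' : IntegrableOn (fun r : ℝ => a * r) (Ioc 0 lout) :=
      (continuous_const.mul continuous_id).integrableOn_Ioc
    exact ha'.congr_fun (fun r hr => by simp [hh, hr.2]) measurableSet_Ioc
  have hInth : IntegrableOn h (Ioi 0) := by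
    rw [← Ioc_union_Ioi_eq_Ioi hL.le]; exact hInt1.union hInt2
  have hmono : (∫ r in Ioi (0:ℝ), LamQ k (r/lin) * LamQ k (r/lout) * r)
      ≤ ∫ r in Ioi (0:ℝ), h r := by
    apply integral_mono_of_nonneg
    · exact (ae_restrict_iff' measurableSet_Ioi).mpr (ae_of_all _ hF0)
    · exact hInth
    · exact (ae_restrict_iff' measurableSet_Ioi).mpr (ae_of_all _ hFh)
  have hsplit : (∫ r in Ioi (0:ℝ), h r)
      = (∫ r in Ioc (0:ℝ) lout, h r) + ∫ r in Ioi lout, h r := by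
    rw [← Ioc_union_Ioi_eq_Ioi hL.le,
      setIntegral_union (Ioc_disjoint_Ioi le_rfl) measurableSet_Ioi hInt1 hInt2]
  have hval1 : (∫ r in Ioc (0:ℝ) lout, h r) = a * lout ^ 2 / 2 := by
    rw [setIntegral_congr_fun measurableSet_Ioc (g := fun r => a * r)
      (fun r hr => by simp [hh, hr.2]),
      ← intervalIntegral.integral_of_le hL.le, intervalIntegral.integral_const_mul, integral_id]
    ring
  have hval2 : (∫ r in Ioi lout, h r) = b * (lout ^ ((2:ℝ) - 2*k) / (2*k - 2)) := by
    rw [setIntegral_congr_fun measurableSet_Ioi (g := fun r => b * r ^ ((1:ℝ) - 2*k))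
      (fun r hr => by simp only [mem_Ioi] at hr; simp [hh, not_le.mpr hr]),
      integral_const_mul, integral_Ioi_rpow_of_lt hexp hL]
    congr 1
    rw [show (1:ℝ) - 2*k + 1 = 2 - 2*k by ring, neg_div, ← div_neg,
      show -((2:ℝ) - 2*k) = 2*k - 2 by ring]
  have hden : (0:ℝ) < 2*k - 2 := by
    have : (2:ℝ) ≤ k := by exact_mod_cast hk
    linarith
  have hrp : lout ^ ((2:ℝ) - 2*k) = lout ^ 2 / lout ^ (2*k) := by
    rw [eq_div_iff (by positivity), ← Real.rpow_natCast lout (2*k), ← Real.rpow_add hL,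
      ← Real.rpow_natCast lout 2]
    congr 1
    push_cast; ring
  obtain ⟨m, hkm⟩ : ∃ m, k = m + 1 := ⟨k - 1, (Nat.succ_pred_eq_of_pos (by omega)).symm⟩
  have hkm1 : k - 1 = m := by omega
  have step1 : (1/(lin*lout)) * (a * lout ^ 2 / 2) = 2*(k:ℝ)^2 * (lin/lout)^(k-1) := by
    rw [ha, hkm1, hkm]
    field_simp
    ring_nf
    have hLi : lout * lout⁻¹ = 1 := mul_inv_cancel₀ hL.ne'
    linear_combination (lin * lin ^ m * lout⁻¹ ^ m * 4) * hLi
  have step2 : (1/(lin*lout)) * (b * (lout ^ ((2:ℝ) - 2*k) / (2*k - 2)))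
      = (4*(k:ℝ)^2/(2*k - 2)) * (lin/lout)^(k-1) := by
    have e1 : ∀ x : ℝ, x ^ k = x ^ (k-1) * x := fun x => by
      conv_lhs => rw [← Nat.sub_add_cancel (by omega : 1 ≤ k)]
      rw [pow_succ]
    have e2 : lout ^ (2*k) = lout ^ k * lout ^ k := by rw [two_mul, pow_add]
    rw [hrp, hb, mul_pow, e2, e1 lin, e1 lout, div_pow]
    field_simp [hl.ne', hL.ne', hden.ne', pow_ne_zero (k-1) hL.ne', pow_ne_zero (k-1) hl.ne']
  have hco : 4*(k:ℝ)^2/(2*k - 2) ≤ 2*(k:ℝ)^2 := by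
    rw [div_le_iff₀ hden]
    have : (2:ℝ) ≤ k := by exact_mod_cast hk
    nlinarith
  have hmu : (0:ℝ) ≤ (lin/lout)^(k-1) := by positivity
  calc (1 / (lin * lout)) * ∫ r in Set.Ioi (0 : ℝ), LamQ k (r / lin) * LamQ k (r / lout) * r
      ≤ (1 / (lin * lout)) * ((a * lout ^ 2 / 2) + b * (lout ^ ((2:ℝ) - 2*k) / (2*k - 2))) := by
        apply mul_le_mul_of_nonneg_left _ (by positivity)
        rw [← hval1, ← hval2, ← hsplit]
        exact hmono
    _ = 2*(k:ℝ)^2 * (lin/lout)^(k-1) + (4*(k:ℝ)^2/(2*k - 2)) * (lin/lout)^(k-1) := by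
        rw [mul_add, step1, step2]
    _ ≤ 4 * (k:ℝ)^2 * (lin / lout) ^ (k - 1) := by nlinarith
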